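/- Let A, B, p0, p5 be integers and let p1, p2, p3, p4 ∈ {1, −1}. Suppose (p_n)_{n≥0} is a sequence of rational numbers with these initial values which satisfies the trilinear Boussinesq recurrence p_{n+6} = −(A·p_{n+1}·p_{n+3}·p_{n+5} + B·p_{n+2}·p_{n+3}·p_{n+4} + p_n·p_{n+4}·p_{n+5})/(p_{n+1}·p_{n+2}) for all n ≥ 0, and that p_{n+1}·p_{n+2} ≠ 0 at every step (so the sequence is well defined). Then every term p_n is an integer. -/

import Mathlib

namespace Stmt3Aux
open MvPolynomial
abbrev F4 := MvPolynomial (Fin 4) ℤ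
noncomputable def psa : F4 →ₐ[ℤ] F4 := aeval (fun i => if i = 0 then X 0 else 0)
noncomputable def psc : F4 →ₐ[ℤ] F4 := aeval (fun i => if i = 0 then 0 else X i)
noncomputable def cp (n : ℕ) : F4 := if n % 3 = 0 then X 1 else if n % 3 = 1 then X 2 else X 3
lemma psa_X0 : psa (X 0) = X 0 := by simp [psa]
lemma psc_X0 : psc (X 0) = 0 := by simp [psc]
lemma cp_add3 (n : ℕ) : cp (n + 3) = cp n := by simp [cp, Nat.add_mod_right]
lemma psa_cp (n : ℕ) : psa (cp n) = 0 := by unfold cp psa; split_ifs <;> simp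
lemma psc_cp (n : ℕ) : psc (cp n) = cp n := by unfold cp psc; split_ifs <;> simp
lemma cp_ne_zero (n : ℕ) : cp n ≠ 0 := by unfold cp; split_ifs <;> exact X_ne_zero _
lemma prime_X4 (i : Fin 4) : Prime (X i : F4) := by
  have h0 : Prime (X 0 : F4) := by
    rw [← MulEquiv.prime_iff (finSuccEquiv ℤ 3).toMulEquiv]
    have h : ((finSuccEquiv ℤ 3).toMulEquiv (X 0 : F4)) = Polynomial.X := finSuccEquiv_X_zero
    rw [h]; exact Polynomial.prime_X
  have h := (MulEquiv.prime_iff (renameEquiv ℤ (Equiv.swap (0 : Fin 4) i)).toMulEquiv (p := (X 0 : F4))).mpr h0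
  simpa [renameEquiv_apply, rename_X, Equiv.swap_apply_left] using h
lemma cp_prime (n : ℕ) : Prime (cp n) := by unfold cp; split_ifs <;> exact prime_X4 _
lemma isRelPrime_of_no_prime {x y : F4} (hx : x ≠ 0)
    (h : ∀ q : F4, Prime q → q ∣ x → q ∣ y → False) : IsRelPrime x y := by
  intro z hzx hzy
  by_contra hz
  have hz0 : z ≠ 0 := by rintro rfl; exact hx (zero_dvd_iff.mp hzx)
  obtain ⟨i, hi, hiz⟩ := WfDvdMonoid.exists_irreducible_factor hz hz0
  exact h i (UniqueFactorizationMonoid.irreducible_iff_prime.mp hi) (hiz.trans hzx) (hiz.trans hzy)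
lemma isRelPrime_of_isUnit_right {x y : F4} (hy : IsUnit y) : IsRelPrime x y :=
  fun _ _ hzy => isUnit_of_dvd_unit hzy hy
def prop (e1 e2 e3 e4 : ℤ) (Q : ℕ → F4) (N : ℕ) : Prop :=
  Q 1 = C e1 ∧ Q 2 = C e2 ∧ Q 3 = C e3 ∧ Q 4 = C e4 ∧
  (∀ n, 1 ≤ n → n + 4 ≤ N →
    Q n * Q (n + 4) = cp n * Q (n + 2) ^ 2 + X 0 * Q (n + 1) * Q (n + 3)) ∧
  (∀ m, 1 ≤ m → m ≤ N → psa (Q m) ≠ 0 ∧ psc (Q m) ≠ 0) ∧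
  (∀ m, 1 ≤ m → m + 1 ≤ N → IsRelPrime (Q m) (Q (m + 1))) ∧
  (∀ m, 1 ≤ m → m + 2 ≤ N → IsRelPrime (Q m) (Q (m + 2))) ∧
  (∀ m, 1 ≤ m → m + 3 ≤ N → IsRelPrime (Q m) (Q (m + 3)))
variable {e1 e2 e3 e4 : ℤ}
lemma propQb (h1 : e1 = 1 ∨ e1 = -1) (h2 : e2 = 1 ∨ e2 = -1)
    (h3 : e3 = 1 ∨ e3 = -1) (h4 : e4 = 1 ∨ e4 = -1) {N : ℕ} (hN : N ≤ 4) :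
    prop e1 e2 e3 e4
      (fun m => if m = 1 then C e1 else if m = 2 then C e2 else if m = 3 then C e3 else C e4) N := by
  have hu : ∀ e : ℤ, (e = 1 ∨ e = -1) → IsUnit (C e : F4) := fun e he => (Int.isUnit_iff.mpr he).map C
  have hC : ∀ e : ℤ, (e = 1 ∨ e = -1) → psa (C e : F4) ≠ 0 ∧ psc (C e : F4) ≠ 0 := by
    intro e he
    have h0 : e ≠ 0 := by rcases he with h | h <;> simp [h]
    constructor <;> · simp [psa, psc, aeval_C]; exact_mod_cast h0
  refine ⟨by simp, by simp, by simp, by simp, ?_, ?_, ?_, ?_, ?_⟩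
  · intro n hn hn4; omega
  · intro m hm hmN
    have hm4 : m ≤ 4 := by omega
    interval_cases m <;> simp only [] <;>
      first | exact hC e1 h1 | exact hC e2 h2 | exact hC e3 h3 | exact hC e4 h4
  all_goals
    intro m hm hmN
    apply isRelPrime_of_isUnit_right
    simp only []
    split_ifs <;> first | exact hu e1 h1 | exact hu e2 h2 | exact hu e3 h3 | exact hu e4 h4

lemma build (h1 : e1 = 1 ∨ e1 = -1) (h2 : e2 = 1 ∨ e2 = -1)
    (h3 : e3 = 1 ∨ e3 = -1) (h4 : e4 = 1 ∨ e4 = -1) :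
    ∀ N, ∃ Q : ℕ → F4, prop e1 e2 e3 e4 Q N := by
  intro N
  induction N with
  | zero => exact ⟨_, propQb h1 h2 h3 h4 (by omega)⟩
  | succ N ih =>
    rcases Nat.lt_or_ge N 4 with hN | hN
    · exact ⟨_, propQb h1 h2 h3 h4 (by omega)⟩
    obtain ⟨Q, hQ⟩ := ih
    obtain ⟨hQ1, hQ2, hQ3, hQ4, hrel, hps, hrp1, hrp2, hrp3⟩ := hQ
    obtain ⟨n, hn1, rfl⟩ : ∃ n, 1 ≤ n ∧ N = n + 3 := ⟨N - 3, by omega, by omega⟩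
    set W : F4 := cp n * Q (n + 2) ^ 2 + X 0 * Q (n + 1) * Q (n + 3) with hW
    have hQne : ∀ m, 1 ≤ m → m ≤ n + 3 → Q m ≠ 0 := by
      intro m hm hm2 h0
      exact (hps m hm hm2).1 (by rw [h0, map_zero])
    have H12 : IsRelPrime (Q (n+1)) (Q (n+2)) := by
      have h := hrp1 (n+1) (by omega) (by omega)
      rwa [show n+1+1 = n+2 from by omega] at h
    have H23 : IsRelPrime (Q (n+2)) (Q (n+3)) := by
      have h := hrp1 (n+2) (by omega) (by omega)
      rwa [show n+2+1 = n+3 from by omega] at h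
    have hdvd : Q n ∣ W := by
      rcases Nat.lt_or_ge n 5 with hn5 | hn5
      · -- unit case
        have hu : IsUnit (Q n) := by
          interval_cases n
          · rw [hQ1]; exact (Int.isUnit_iff.mpr h1).map C
          · rw [hQ2]; exact (Int.isUnit_iff.mpr h2).map C
          · rw [hQ3]; exact (Int.isUnit_iff.mpr h3).map C
          · rw [hQ4]; exact (Int.isUnit_iff.mpr h4).map C
        exact hu.dvd
      obtain ⟨k, rfl⟩ : ∃ k, n = k + 5 := ⟨n - 5, by omega⟩
      have r1 := hrel (k + 1) (by omega) (by omega)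
      have r2 := hrel (k + 2) (by omega) (by omega)
      have r3 := hrel (k + 3) (by omega) (by omega)
      have r4 := hrel (k + 4) (by omega) (by omega)
      simp only [show k+1+4 = k+5 from by omega, show k+1+2 = k+3 from by omega,
        show k+1+1 = k+2 from by omega, show k+1+3 = k+4 from by omega] at r1
      simp only [show k+2+4 = k+6 from by omega, show k+2+2 = k+4 from by omega,
        show k+2+1 = k+3 from by omega, show k+2+3 = k+5 from by omega] at r2
      simp only [show k+3+4 = k+7 from by omega, show k+3+2 = k+5 from by omega,
        show k+3+1 = k+4 from by omega, show k+3+3 = k+6 from by omega] at r3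
      simp only [show k+4+4 = k+8 from by omega, show k+4+2 = k+6 from by omega,
        show k+4+1 = k+5 from by omega, show k+4+3 = k+7 from by omega] at r4
      rw [show k+4 = (k+1)+3 from by omega, cp_add3] at r4
      have hW2 : W = cp (k + 2) * Q (k + 7) ^ 2 + X 0 * Q (k + 6) * Q (k + 8) := by
        rw [hW, show k+5+2 = k+7 from by omega, show k+5+1 = k+6 from by omega,
          show k+5+3 = k+8 from by omega, show k+5 = (k+2)+3 from by omega, cp_add3]
      have key : Q (k+2) * (Q (k+3)^2 * (Q (k+4) * W)) = Q (k+5) *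
          (X 0 * cp (k+2) * Q (k+1) * Q (k+4)^2 * Q (k+6)^2
            + cp (k+2) * Q (k+2) * Q (k+4) *
              ((cp (k+3))^2 * Q (k+5)^3 + 2 * X 0 * cp (k+3) * Q (k+5) * Q (k+4) * Q (k+6))
            + X 0 * Q (k+3)^2 *
              (X 0 * cp (k+2) * Q (k+4)^2 * Q (k+7) + X 0 * cp (k+1) * Q (k+3) * Q (k+6)^2
                + X 0^2 * Q (k+3) * Q (k+5) * Q (k+7))) := by
        rw [hW2]
        linear_combination (X 0 * Q (k+3)^2 * Q (k+2) * Q (k+6)) * r4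
          + (cp (k+2) * Q (k+2) * Q (k+4) *
              (Q (k+3) * Q (k+7) + cp (k+3) * Q (k+5)^2 + X 0 * Q (k+4) * Q (k+6))) * r3
          + (X 0 * Q (k+3)^2 * (cp (k+1) * Q (k+6)^2 + X 0 * Q (k+5) * Q (k+7))) * r2
          + (-(cp (k+2) * X 0 * Q (k+4)^2 * Q (k+6)^2)) * r1
      have hd1 : Q (k+5) ∣ Q (k+2) * (Q (k+3)^2 * (Q (k+4) * W)) := ⟨_, key⟩
      have rpA : IsRelPrime (Q (k+5)) (Q (k+2)) := (hrp3 (k+2) (by omega) (by omega)).symm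
      have rpB : IsRelPrime (Q (k+5)) (Q (k+3)^2) :=
        ((hrp2 (k+3) (by omega) (by omega)).symm).pow_right
      have rpC : IsRelPrime (Q (k+5)) (Q (k+4)) := (hrp1 (k+4) (by omega) (by omega)).symm
      exact rpC.dvd_of_dvd_mul_left (rpB.dvd_of_dvd_mul_left (rpA.dvd_of_dvd_mul_left hd1))
    obtain ⟨z, hz⟩ := hdvd
    refine ⟨Function.update Q (n + 4) z, ?_, ?_, ?_, ?_, ?_, ?_, ?_, ?_, ?_⟩
    · rw [Function.update_of_ne (by omega)]; exact hQ1
    · rw [Function.update_of_ne (by omega)]; exact hQ2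
    · rw [Function.update_of_ne (by omega)]; exact hQ3
    · rw [Function.update_of_ne (by omega)]; exact hQ4
    · -- relations
      intro n' h1' h2'
      rcases Nat.lt_or_ge (n' + 4) (n + 4) with hlt | hge
      · rw [Function.update_of_ne (by omega), Function.update_of_ne (by omega),
          Function.update_of_ne (by omega), Function.update_of_ne (by omega),
          Function.update_of_ne (by omega)]
        exact hrel n' h1' (by omega)
      · have hn' : n' = n := by omega
        subst hn'
        rw [Function.update_of_ne (by omega), Function.update_self,
          Function.update_of_ne (by omega), Function.update_of_ne (by omega),
          Function.update_of_ne (by omega)]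
        exact hz.symm
    · -- psa psc nonzero
      intro m hm hmN
      rcases Nat.lt_or_ge m (n + 4) with hlt | hge
      · rw [Function.update_of_ne (by omega)]
        exact hps m hm (by omega)
      · have hm' : m = n + 4 := by omega
        subst hm'
        rw [Function.update_self]
        have ea : psa (Q n) * psa z = X 0 * psa (Q (n+1)) * psa (Q (n+3)) := by
          have h' := congrArg psa hz
          rw [hW] at h'
          simpa [map_add, map_mul, map_pow, psa_cp, psa_X0] using h'.symm
        have ec : psc (Q n) * psc z = cp n * psc (Q (n+2)) ^ 2 := by
          have h' := congrArg psc hz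
          rw [hW] at h'
          simpa [map_add, map_mul, map_pow, psc_cp, psc_X0] using h'.symm
        constructor
        · intro h0
          rw [h0, mul_zero] at ea
          exact (mul_ne_zero (mul_ne_zero (X_ne_zero 0)
            (hps (n+1) (by omega) (by omega)).1) (hps (n+3) (by omega) (by omega)).1) ea.symm
        · intro h0
          rw [h0, mul_zero] at ec
          exact (mul_ne_zero (cp_ne_zero n)
            (pow_ne_zero 2 (hps (n+2) (by omega) (by omega)).2)) ec.symm
    · -- RP1
      intro m hm hmN
      rcases Nat.lt_or_ge (m + 1) (n + 4) with hlt | hge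
      · rw [Function.update_of_ne (by omega), Function.update_of_ne (by omega)]
        exact hrp1 m hm (by omega)
      · have hm' : m = n + 3 := by omega
        subst hm'
        rw [Function.update_of_ne (by omega), show n + 3 + 1 = n + 4 from by omega,
          Function.update_self]
        apply isRelPrime_of_no_prime (hQne (n+3) (by omega) (by omega))
        intro q hq hq3 hqz
        have hqW : q ∣ W := by rw [hz]; exact hqz.mul_left (Q n)
        have hq2 : q ∣ cp n * Q (n+2)^2 := by
          have h' : cp n * Q (n+2)^2 = W - X 0 * Q (n+1) * Q (n+3) := by rw [hW]; ring
          rw [h']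
          exact dvd_sub hqW (hq3.mul_left _)
        rcases (hq.dvd_mul).mp hq2 with hc | hp2
        · have hassoc : Associated q (cp n) := hq.associated_of_dvd (cp_prime n) hc
          obtain ⟨t, ht⟩ := (hassoc.symm.dvd).trans hq3
          exact (hps (n+3) (by omega) (by omega)).1 (by rw [ht, map_mul, psa_cp, zero_mul])
        · exact hq.not_unit (H23 (hq.dvd_of_dvd_pow hp2) hq3)
    · -- RP2
      intro m hm hmN
      rcases Nat.lt_or_ge (m + 2) (n + 4) with hlt | hge
      · rw [Function.update_of_ne (by omega), Function.update_of_ne (by omega)]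
        exact hrp2 m hm (by omega)
      · have hm' : m = n + 2 := by omega
        subst hm'
        rw [Function.update_of_ne (by omega), show n + 2 + 2 = n + 4 from by omega,
          Function.update_self]
        apply isRelPrime_of_no_prime (hQne (n+2) (by omega) (by omega))
        intro q hq hqm hqz
        have hqW : q ∣ W := by rw [hz]; exact hqz.mul_left (Q n)
        have hqx : q ∣ X 0 * Q (n+1) * Q (n+3) := by
          have h' : X 0 * Q (n+1) * Q (n+3) = W - cp n * Q (n+2)^2 := by rw [hW]; ring
          rw [h']
          exact dvd_sub hqW ((dvd_pow hqm (by omega)).mul_left _)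
        rcases (hq.dvd_mul).mp hqx with hl | h3
        · rcases (hq.dvd_mul).mp hl with hx0 | h1'
          · have hassoc : Associated q (X 0 : F4) := hq.associated_of_dvd (prime_X4 0) hx0
            obtain ⟨t, ht⟩ := (hassoc.symm.dvd).trans hqm
            exact (hps (n+2) (by omega) (by omega)).2 (by rw [ht, map_mul, psc_X0, zero_mul])
          · exact hq.not_unit (H12 h1' hqm)
        · exact hq.not_unit (H23 hqm h3)
    · -- RP3
      intro m hm hmN
      rcases Nat.lt_or_ge (m + 3) (n + 4) with hlt | hge
      · rw [Function.update_of_ne (by omega), Function.update_of_ne (by omega)]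
        exact hrp3 m hm (by omega)
      · have hm' : m = n + 1 := by omega
        subst hm'
        rw [Function.update_of_ne (by omega), show n + 1 + 3 = n + 4 from by omega,
          Function.update_self]
        apply isRelPrime_of_no_prime (hQne (n+1) (by omega) (by omega))
        intro q hq hqm hqz
        have hqW : q ∣ W := by rw [hz]; exact hqz.mul_left (Q n)
        have hq2 : q ∣ cp n * Q (n+2)^2 := by
          have h' : cp n * Q (n+2)^2 = W - X 0 * Q (n+1) * Q (n+3) := by rw [hW]; ring
          rw [h']
          exact dvd_sub hqW ((hqm.mul_left (X 0)).mul_right (Q (n+3)))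
        rcases (hq.dvd_mul).mp hq2 with hc | hp2
        · have hassoc : Associated q (cp n) := hq.associated_of_dvd (cp_prime n) hc
          obtain ⟨t, ht⟩ := (hassoc.symm.dvd).trans hqm
          exact (hps (n+1) (by omega) (by omega)).1 (by rw [ht, map_mul, psa_cp, zero_mul])
        · exact hq.not_unit (H12 hqm (hq.dvd_of_dvd_pow hp2))


lemma key_int (A c0 c1 c2 : ℤ)
    (h1 : e1 = 1 ∨ e1 = -1) (h2 : e2 = 1 ∨ e2 = -1)
    (h3 : e3 = 1 ∨ e3 = -1) (h4 : e4 = 1 ∨ e4 = -1) (p : ℕ → ℚ)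
    (hp1 : p 1 = (e1 : ℚ)) (hp2 : p 2 = (e2 : ℚ)) (hp3 : p 3 = (e3 : ℚ)) (hp4 : p 4 = (e4 : ℚ))
    (hpn : ∀ k : ℕ, p (k + 1) ≠ 0)
    (hS : ∀ n : ℕ, p n * p (n + 4) + (A : ℚ) * p (n + 1) * p (n + 3)
        = ((if n % 3 = 0 then c0 else if n % 3 = 1 then c1 else c2 : ℤ) : ℚ) * p (n + 2) ^ 2) :
    ∀ m : ℕ, 1 ≤ m → ∃ k : ℤ, p m = (k : ℚ) := by
  classical
  set v : Fin 4 → ℤ :=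
    fun i => if i = 0 then -A else if i = 1 then c0 else if i = 2 then c1 else c2 with hv
  have evcp : ∀ n : ℕ, eval v (cp n)
      = (if n % 3 = 0 then c0 else if n % 3 = 1 then c1 else c2) := by
    intro n
    unfold cp
    split_ifs <;> rw [eval_X] <;> rfl
  have evX0 : eval v (X 0 : F4) = -A := by simp [hv, eval_X]
  intro m hm
  obtain ⟨Q, hQ1, hQ2, hQ3, hQ4, hrel, hps, _, _, _⟩ := build h1 h2 h3 h4 m
  suffices hmatch : ∀ j, j ≤ m → 1 ≤ j → p j = ((eval v (Q j) : ℤ) : ℚ) by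
    exact ⟨eval v (Q m), hmatch m le_rfl hm⟩
  intro j
  induction j using Nat.strong_induction_on with
  | _ j ih =>
    intro hjm hj1
    rcases Nat.lt_or_ge j 5 with hj5 | hj5
    · interval_cases j
      · rw [hQ1, eval_C]; exact hp1
      · rw [hQ2, eval_C]; exact hp2
      · rw [hQ3, eval_C]; exact hp3
      · rw [hQ4, eval_C]; exact hp4
    obtain ⟨k, rfl⟩ : ∃ k, j = k + 4 := ⟨j - 4, by omega⟩
    have hk1 : 1 ≤ k := by omega
    have r := hrel k (by omega) (by omega)
    have er := congrArg (fun q : F4 => ((eval v q : ℤ) : ℚ)) r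
    simp only [map_mul, map_add, map_pow, evcp, evX0, Int.cast_mul, Int.cast_add,
      Int.cast_pow, Int.cast_neg] at er
    have e0 : p k = ((eval v (Q k) : ℤ) : ℚ) := ih k (by omega) (by omega) hk1
    have e1' : p (k+1) = ((eval v (Q (k+1)) : ℤ) : ℚ) := ih (k+1) (by omega) (by omega) (by omega)
    have e2' : p (k+2) = ((eval v (Q (k+2)) : ℤ) : ℚ) := ih (k+2) (by omega) (by omega) (by omega)
    have e3' : p (k+3) = ((eval v (Q (k+3)) : ℤ) : ℚ) := ih (k+3) (by omega) (by omega) (by omega)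
    rw [← e0, ← e1', ← e2', ← e3'] at er
    have hkne : p k ≠ 0 := by
      obtain ⟨k', rfl⟩ : ∃ k', k = k' + 1 := ⟨k - 1, by omega⟩
      exact hpn k'
    have hSk := hS k
    have hfin : p k * ((eval v (Q (k+4)) : ℤ) : ℚ) = p k * p (k + 4) := by
      rw [er]; linear_combination -hSk
    exact (mul_left_cancel₀ hkne hfin).symm


end Stmt3Aux


/-- for integer parameters `A, B, p0, p5` and signs `p1, p2, p3, p4 ∈ {1, -1}`,
any well-defined rational solution of the trilinear Boussinesq recurrence
`p (n+6) = -(A p(n+1) p(n+3) p(n+5) + B p(n+2) p(n+3) p(n+4) + p n p(n+4) p(n+5))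
/ (p(n+1) p(n+2))` with these initial values consists entirely of integers. -/
theorem stmt_3 (A B a0 a1 a2 a3 a4 a5 : ℤ)
    (h1 : a1 = 1 ∨ a1 = -1) (h2 : a2 = 1 ∨ a2 = -1)
    (h3 : a3 = 1 ∨ a3 = -1) (h4 : a4 = 1 ∨ a4 = -1)
    (p : ℕ → ℚ)
    (hp0 : p 0 = (a0 : ℚ)) (hp1 : p 1 = (a1 : ℚ)) (hp2 : p 2 = (a2 : ℚ))
    (hp3 : p 3 = (a3 : ℚ)) (hp4 : p 4 = (a4 : ℚ)) (hp5 : p 5 = (a5 : ℚ))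
    (hden : ∀ n : ℕ, p (n + 1) * p (n + 2) ≠ 0)
    (hrec : ∀ n : ℕ,
      p (n + 6) =
        -((A : ℚ) * p (n + 1) * p (n + 3) * p (n + 5) +
            (B : ℚ) * p (n + 2) * p (n + 3) * p (n + 4) +
            p n * p (n + 4) * p (n + 5)) /
          (p (n + 1) * p (n + 2))) :
    ∀ n : ℕ, ∃ k : ℤ, p n = (k : ℚ) := by
  have pne : ∀ k : ℕ, p (k + 1) ≠ 0 := fun k => left_ne_zero_of_mul (hden k)
  have q1 : (a1 : ℚ)^2 = 1 := by rcases h1 with h | h <;> rw [h] <;> norm_num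
  have q2 : (a2 : ℚ)^2 = 1 := by rcases h2 with h | h <;> rw [h] <;> norm_num
  have q3 : (a3 : ℚ)^2 = 1 := by rcases h3 with h | h <;> rw [h] <;> norm_num
  have q4 : (a4 : ℚ)^2 = 1 := by rcases h4 with h | h <;> rw [h] <;> norm_num
  have hp6 : p 6 = ((-(A*a1*a3*a5 + B*a2*a3*a4 + a0*a4*a5)*(a1*a2) : ℤ) : ℚ) := by
    have h0 := hrec 0
    norm_num at h0
    rw [hp0, hp1, hp2, hp3, hp4, hp5] at h0
    have hd : (a1 : ℚ) * (a2 : ℚ) ≠ 0 := by rw [← hp1, ← hp2]; exact hden 0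
    rw [h0, div_eq_iff hd]
    push_cast
    linear_combination ((↑A*↑a1*↑a3*↑a5 + ↑B*↑a2*↑a3*↑a4 + ↑a0*↑a4*↑a5) * (a1:ℚ)^2) * q2
      + (↑A*↑a1*↑a3*↑a5 + ↑B*↑a2*↑a3*↑a4 + ↑a0*↑a4*↑a5) * q1
  have hS : ∀ n : ℕ, (p n * p (n + 4) + (A : ℚ) * p (n + 1) * p (n + 3)
      = ((if n % 3 = 0 then a0*a4 + A*a1*a3 else if n % 3 = 1 then a1*a5 + A*a2*a4
          else a2*(-(A*a1*a3*a5 + B*a2*a3*a4 + a0*a4*a5)*(a1*a2)) + A*a3*a5 : ℤ) : ℚ)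
        * p (n + 2) ^ 2) := by
    intro n
    induction n using Nat.strong_induction_on with
    | _ n ih =>
      rcases Nat.lt_or_ge n 3 with hn3 | hn3
      · interval_cases n
        · rw [if_pos (show (0:ℕ) % 3 = 0 by norm_num)]
          rw [hp0, hp1, hp2, hp3, hp4]
          push_cast
          linear_combination (-(↑a0*↑a4 + ↑A*↑a1*↑a3)) * q2
        · rw [if_neg (show ¬((1:ℕ) % 3 = 0) by norm_num), if_pos (show (1:ℕ) % 3 = 1 by norm_num)]
          rw [hp1, hp2, hp3, hp4, hp5]
          push_cast
          linear_combination (-(↑a1*↑a5 + ↑A*↑a2*↑a4)) * q3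
        · rw [if_neg (show ¬((2:ℕ) % 3 = 0) by norm_num), if_neg (show ¬((2:ℕ) % 3 = 1) by norm_num)]
          rw [hp2, hp3, hp4, hp5, hp6]
          push_cast
          linear_combination (-(↑a2 * (-(↑A*↑a1*↑a3*↑a5 + ↑B*↑a2*↑a3*↑a4 + ↑a0*↑a4*↑a5)*(↑a1*↑a2))
            + ↑A*↑a3*↑a5)) * q4
      · obtain ⟨k, rfl⟩ : ∃ k, n = k + 3 := ⟨n - 3, by omega⟩
        have ihk := ih k (by omega)
        have n1 : p (k+1) ≠ 0 := pne k
        have n2 : p (k+2) ≠ 0 := pne (k+1)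
        have n3 : p (k+3) ≠ 0 := pne (k+2)
        have e6 : p (k+6) * (p (k+1) * p (k+2))
            = -((A:ℚ) * p (k+1) * p (k+3) * p (k+5) + (B:ℚ) * p (k+2) * p (k+3) * p (k+4)
                + p k * p (k+4) * p (k+5)) := by
          rw [hrec k]
          exact div_mul_cancel₀ _ (mul_ne_zero n1 n2)
        have h7 := hrec (k+1)
        simp only [show k+1+6 = k+7 from by omega, show k+1+1 = k+2 from by omega,
          show k+1+3 = k+4 from by omega, show k+1+5 = k+6 from by omega,
          show k+1+2 = k+3 from by omega, show k+1+4 = k+5 from by omega] at h7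
        have e7 : p (k+7) * (p (k+2) * p (k+3))
            = -((A:ℚ) * p (k+2) * p (k+4) * p (k+6) + (B:ℚ) * p (k+3) * p (k+4) * p (k+5)
                + p (k+1) * p (k+5) * p (k+6)) := by
          rw [h7]
          exact div_mul_cancel₀ _ (mul_ne_zero n2 n3)
        have consM : ((p (k+3) * p (k+7) + (A:ℚ) * p (k+4) * p (k+6)) * p (k+2)^2)
              * (p (k+1) * p (k+2) * p (k+3))
            = ((p k * p (k+4) + (A:ℚ) * p (k+1) * p (k+3)) * p (k+5)^2)
              * (p (k+1) * p (k+2) * p (k+3)) := by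
          linear_combination (p (k+1) * p (k+2)^2 * p (k+3)) * e7
            - (p (k+1) * p (k+2) * p (k+3) * p (k+5)) * e6
        have cons := mul_right_cancel₀ (mul_ne_zero (mul_ne_zero n1 n2) n3) consM
        rw [show (k+3) % 3 = k % 3 from Nat.add_mod_right k 3,
          show k+3+4 = k+7 from by omega, show k+3+1 = k+4 from by omega,
          show k+3+3 = k+6 from by omega, show k+3+2 = k+5 from by omega]
        have final : (p (k+3) * p (k+7) + (A:ℚ) * p (k+4) * p (k+6)) * p (k+2)^2
            = (((if k % 3 = 0 then a0*a4 + A*a1*a3 else if k % 3 = 1 then a1*a5 + A*a2*a4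
                else a2*(-(A*a1*a3*a5 + B*a2*a3*a4 + a0*a4*a5)*(a1*a2)) + A*a3*a5 : ℤ) : ℚ)
              * p (k+5)^2) * p (k+2)^2 := by
          linear_combination cons + p (k+5)^2 * ihk
        exact mul_right_cancel₀ (pow_ne_zero 2 n2) final
  intro n
  match n with
  | 0 => exact ⟨a0, hp0⟩
  | (m+1) =>
    exact Stmt3Aux.key_int A (a0*a4 + A*a1*a3) (a1*a5 + A*a2*a4)
      (a2*(-(A*a1*a3*a5 + B*a2*a3*a4 + a0*a4*a5)*(a1*a2)) + A*a3*a5)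
      h1 h2 h3 h4 p hp1 hp2 hp3 hp4 pne hS (m+1) (by omega)
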